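/- arXiv:2602.18220 — 4 statements merged into one kernel-verified Lean document; each statement's English description precedes it below -/
import Mathlib

section
/- Let D = D(𝒢,m,f) be a Dyer group. Then Cay(D,X_S) contains no induced copy of K₄ minus an edge; that is, there do not exist four distinct vertices g, h, p, q of Cay(D,X_S) such that g, h, p, q are pairwise adjacent except that p and q are not adjacent. -/
universe u

/-! ### Dyer graphs and Dyer groups -/

/-- A Dyer graph: a finite simplicial graph `graph` together with an edge-labelling
`m : E(𝒢) → ℕ_{≥2}` (encoded as a symmetric function on pairs of vertices) and a
vertex-labelling `f : V(𝒢) → ℕ_{≥2} ∪ {∞}`, subject to the compatibility condition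
that `m(e) ≠ 2` forces both endpoints of `e` to have label `2`. -/
structure DyerGraph (V : Type u) [Fintype V] where
  graph : SimpleGraph V
  m : V → V → ℕ
  m_symm : ∀ u v, m u v = m v u
  two_le_m : ∀ u v, graph.Adj u v → 2 ≤ m u v
  f : V → ℕ∞
  two_le_f : ∀ v, 2 ≤ f v
  compat : ∀ u v, graph.Adj u v → m u v ≠ 2 → f u = 2 ∧ f v = 2

/-- The alternating product `a b a b ⋯` with `k` factors, in the free group. -/
def altWord {V : Type u} : ℕ → FreeGroup V → FreeGroup V → FreeGroup V
  | 0, _, _ => 1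
  | k + 1, a, b => a * altWord k b a

namespace DyerGraph

variable {V : Type u} [Fintype V] (Δ : DyerGraph V)

/-- The defining relators of the Dyer group: `x_v ^ f(v) = 1` whenever `f(v) ≠ ∞`,
and `[x_u,x_v]_{m(e)} = [x_v,x_u]_{m(e)}` for every edge `e = {u,v}`. -/
def rels : Set (FreeGroup V) :=
  {r | (∃ v : V, ∃ n : ℕ, Δ.f v = (n : ℕ∞) ∧ r = FreeGroup.of v ^ n) ∨
    (∃ u v : V, Δ.graph.Adj u v ∧
      r = altWord (Δ.m u v) (FreeGroup.of u) (FreeGroup.of v) *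
        (altWord (Δ.m u v) (FreeGroup.of v) (FreeGroup.of u))⁻¹)}

end DyerGraph

/-- The Dyer group `D(𝒢,m,f)` given by the standard presentation. -/
abbrev DyerGroup {V : Type u} [Fintype V] (Δ : DyerGraph V) : Type u :=
  PresentedGroup Δ.rels

namespace DyerGraph

variable {V : Type u} [Fintype V] (Δ : DyerGraph V)

/-- The standard generator `x_v` of the Dyer group. -/
def gen (v : V) : DyerGroup Δ := PresentedGroup.of v

/-- The vertex group of the generator `x_v`:
`{x_v^α : α ∈ ℤ_{f(v)} ∖ {0}}`. -/
def vertexGroup (v : V) : Set (DyerGroup Δ) :=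
  {g | (∃ n : ℕ, Δ.f v = (n : ℕ∞) ∧ ∃ a : ℤ, ¬((n : ℤ) ∣ a) ∧ g = Δ.gen v ^ a) ∨
    (Δ.f v = ⊤ ∧ ∃ a : ℤ, a ≠ 0 ∧ g = Δ.gen v ^ a)}

/-- The finite symmetric generating set `X_S`. -/
def XS : Set (DyerGroup Δ) :=
  {g | ∃ v : V,
    (∃ n : ℕ, Δ.f v = (n : ℕ∞) ∧ ∃ a : ℤ, ¬((n : ℤ) ∣ a) ∧ g = Δ.gen v ^ a) ∨
    (Δ.f v = ⊤ ∧ (g = Δ.gen v ∨ g = (Δ.gen v)⁻¹))}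

/-- The set of syllables `S(X)`. -/
def SX : Set (DyerGroup Δ) := {g | ∃ v : V, g ∈ Δ.vertexGroup v}

end DyerGraph

/-! ### Cayley graphs, paths, cycles and mediangle graphs -/

/-- The Cayley graph of a group `G` with respect to a subset `S`: vertices are the
elements of `G` and `{g,h}` is an edge whenever `g⁻¹ * h ∈ S` (or `h⁻¹ * g ∈ S`;
for symmetric `S` these agree). -/
def cayley (G : Type*) [Group G] (S : Set G) : SimpleGraph G :=
  SimpleGraph.fromRel fun g h => g⁻¹ * h ∈ S

/-- A finite combinatorial path `(v_0, …, v_len)` in a graph, regarded as a function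
`ℕ → V` which is constant equal to `v_len` from `len` on. -/
structure GraphPath {W : Type*} (Γ : SimpleGraph W) where
  len : ℕ
  toFun : ℕ → W
  adj : ∀ i, i < len → Γ.Adj (toFun i) (toFun (i + 1))
  stable : ∀ i, len ≤ i → toFun i = toFun len

/-- A path is geodesic if its length equals the distance between its endpoints. -/
def IsGeodesic {W : Type*} {Γ : SimpleGraph W} (p : GraphPath Γ) : Prop :=
  Γ.dist (p.toFun 0) (p.toFun p.len) = p.len

/-- Two paths `k`-fellow travel if `d(γ(t), α(t)) ≤ k` for all `t`. -/
def FellowTravel {W : Type*} {Γ : SimpleGraph W} (k : ℕ) (p q : GraphPath Γ) : Prop :=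
  ∀ t : ℕ, Γ.dist (p.toFun t) (q.toFun t) ≤ k

/-- A graph has the falsification by fellow-traveller property with constant `k` if every
non-geodesic path is `k`-fellow-travelled by a strictly shorter path with the same
endpoints. -/
def FFTP {W : Type*} (Γ : SimpleGraph W) (k : ℕ) : Prop :=
  ∀ p : GraphPath Γ, ¬ IsGeodesic p →
    ∃ q : GraphPath Γ, q.toFun 0 = p.toFun 0 ∧ q.toFun q.len = p.toFun p.len ∧
      q.len < p.len ∧ FellowTravel k p q

/-- The interval `I(x,y)` between two vertices. -/
def interval {W : Type*} (Γ : SimpleGraph W) (x y : W) : Set W :=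
  {z | Γ.dist x y = Γ.dist x z + Γ.dist z y}

/-- A set of vertices is convex if it contains the interval between any two of its points. -/
def IsConvexSet {W : Type*} (Γ : SimpleGraph W) (s : Set W) : Prop :=
  ∀ x ∈ s, ∀ y ∈ s, interval Γ x y ⊆ s

/-- A combinatorial cycle of length `len ≥ 3` in a graph: an injective map
`ZMod len → W` with consecutive vertices adjacent. -/
structure GraphCycle {W : Type*} (Γ : SimpleGraph W) where
  len : ℕ
  three_le : 3 ≤ len
  toFun : ZMod len → W
  adj : ∀ i : ZMod len, Γ.Adj (toFun i) (toFun (i + 1))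
  inj : Function.Injective toFun

/-- The set of edges of a cycle. -/
def cycleEdges {W : Type*} {Γ : SimpleGraph W} (c : GraphCycle Γ) : Set (Sym2 W) :=
  {e | ∃ i : ZMod c.len, e = s(c.toFun i, c.toFun (i + 1))}

/-- The edge `{x,y}` is an edge of the cycle `c`. -/
def edgeInCycle {W : Type*} {Γ : SimpleGraph W} (c : GraphCycle Γ) (x y : W) : Prop :=
  ∃ i : ZMod c.len,
    (c.toFun i = x ∧ c.toFun (i + 1) = y) ∨ (c.toFun i = y ∧ c.toFun (i + 1) = x)

/-- Triangle condition. -/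
def TriangleCond {W : Type*} (Γ : SimpleGraph W) : Prop :=
  ∀ o x y : W, Γ.dist o x = Γ.dist o y → Γ.Adj x y →
    ∃ z : W, Γ.Adj x z ∧ Γ.Adj y z ∧ z ∈ interval Γ o x ∩ interval Γ o y

/-- No induced copy of `K₄` minus an edge. -/
def NoInducedK4Minus {W : Type*} (Γ : SimpleGraph W) : Prop :=
  ¬ ∃ g h p q : W, g ≠ h ∧ g ≠ p ∧ g ≠ q ∧ h ≠ p ∧ h ≠ q ∧ p ≠ q ∧
    Γ.Adj g h ∧ Γ.Adj g p ∧ Γ.Adj g q ∧ Γ.Adj h p ∧ Γ.Adj h q ∧ ¬ Γ.Adj p q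

/-- Cycle condition. -/
def CycleCond {W : Type*} (Γ : SimpleGraph W) : Prop :=
  ∀ o x y z : W, Γ.dist o z = Γ.dist o x + 1 → Γ.dist o z = Γ.dist o y + 1 →
    Γ.Adj x z → Γ.Adj y z →
    ∃ (c : GraphCycle Γ) (k : ℕ) (i : ZMod c.len),
      c.len = 2 * k ∧ IsConvexSet Γ (Set.range c.toFun) ∧
      edgeInCycle c x z ∧ edgeInCycle c y z ∧ c.toFun i = z ∧
      c.toFun (i + (k : ZMod c.len)) ∈ interval Γ o x ∩ interval Γ o y

/-- Intersection of even cycles condition: any two distinct convex cycles of even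
lengths share at most one edge. -/
def EvenCyclesCond {W : Type*} (Γ : SimpleGraph W) : Prop :=
  ∀ c₁ c₂ : GraphCycle Γ, Even c₁.len → Even c₂.len →
    IsConvexSet Γ (Set.range c₁.toFun) → IsConvexSet Γ (Set.range c₂.toFun) →
    cycleEdges c₁ ≠ cycleEdges c₂ →
    Set.Subsingleton (cycleEdges c₁ ∩ cycleEdges c₂)

/-- A connected graph is mediangle if it satisfies the triangle condition, contains no
induced `K₄` minus an edge, satisfies the cycle condition, and any two distinct convex
even cycles intersect in at most one edge. -/
def IsMediangle {W : Type*} (Γ : SimpleGraph W) : Prop :=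
  Γ.Connected ∧ TriangleCond Γ ∧ NoInducedK4Minus Γ ∧ CycleCond Γ ∧ EvenCyclesCond Γ

/-- The elementary relation generating hyperplanes: two edges lie in a common `3`-cycle,
or they are opposite edges of a common convex cycle of even length. -/
def hypRel {W : Type*} (Γ : SimpleGraph W) (e₁ e₂ : Sym2 W) : Prop :=
  (∃ a b c : W, Γ.Adj a b ∧ Γ.Adj b c ∧ Γ.Adj a c ∧
    e₁ ∈ ({s(a, b), s(b, c), s(a, c)} : Set (Sym2 W)) ∧
    e₂ ∈ ({s(a, b), s(b, c), s(a, c)} : Set (Sym2 W))) ∨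
  (∃ (c : GraphCycle Γ) (k : ℕ) (i : ZMod c.len), c.len = 2 * k ∧
    IsConvexSet Γ (Set.range c.toFun) ∧
    e₁ = s(c.toFun i, c.toFun (i + 1)) ∧
    e₂ = s(c.toFun (i + (k : ZMod c.len)), c.toFun (i + (k : ZMod c.len) + 1)))

/-- Two edges belong to the same hyperplane: equivalence generated by `hypRel`. -/
def sameHyperplane {W : Type*} (Γ : SimpleGraph W) : Sym2 W → Sym2 W → Prop :=
  Relation.EqvGen (hypRel Γ)

/-- A path crosses each hyperplane at most once. -/
def CrossesEachHyperplaneAtMostOnce {W : Type*} {Γ : SimpleGraph W}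
    (p : GraphPath Γ) : Prop :=
  ∀ i j : ℕ, i < p.len → j < p.len → i ≠ j →
    ¬ sameHyperplane Γ s(p.toFun i, p.toFun (i + 1)) s(p.toFun j, p.toFun (j + 1))

/-- A minimal non-geodesic path: a non-geodesic path whose two subpaths obtained by
removing the last, respectively first, edge are geodesic. -/
def MinimalNonGeodesic {W : Type*} {Γ : SimpleGraph W} (p : GraphPath Γ) : Prop :=
  ¬ IsGeodesic p ∧
  Γ.dist (p.toFun 0) (p.toFun (p.len - 1)) = p.len - 1 ∧
  Γ.dist (p.toFun 1) (p.toFun p.len) = p.len - 1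

/-- The edge `{x,y}` is an edge of a `3`-cycle. -/
def EdgeInTriangle {W : Type*} (Γ : SimpleGraph W) (x y : W) : Prop :=
  Γ.Adj x y ∧ ∃ w : W, Γ.Adj x w ∧ Γ.Adj y w

/-- The edge `{x,y}` is an edge of a convex cycle of even length. -/
def EdgeInConvexEvenCycle {W : Type*} (Γ : SimpleGraph W) (x y : W) : Prop :=
  ∃ c : GraphCycle Γ, Even c.len ∧ IsConvexSet Γ (Set.range c.toFun) ∧ edgeInCycle c x y

/-- A dihedral cycle in a Cayley graph of a Dyer group: a cycle of length `2·m(e)` for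
some edge `e = {u,v}` of the Dyer graph, whose consecutive edge labels alternately
belong to the vertex groups of `x_u` and of `x_v`. -/
def DyerGraph.IsDihedral {V : Type u} [Fintype V] (Δ : DyerGraph V)
    {Γ : SimpleGraph (DyerGroup Δ)} (c : GraphCycle Γ) : Prop :=
  ∃ u v : V, Δ.graph.Adj u v ∧ c.len = 2 * Δ.m u v ∧
    ∀ i : ZMod c.len,
      (Even i.val → (c.toFun i)⁻¹ * c.toFun (i + 1) ∈ Δ.vertexGroup u) ∧
      (¬ Even i.val → (c.toFun i)⁻¹ * c.toFun (i + 1) ∈ Δ.vertexGroup v)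

/-! ### Word length and cone types -/

/-- The word length of `g` with respect to the generating set `S`. -/
noncomputable def wordLength {G : Type*} [Group G] (S : Set G) (g : G) : ℕ :=
  sInf {nid | ∃ l : List G, l.length = nid ∧ (∀ s ∈ l, s ∈ S) ∧ l.prod = g}

/-- The cone type of `g`: the set of elements extending `g` geodesically. -/
noncomputable def coneType {G : Type*} [Group G] (S : Set G) (g : G) : Set G :=
  {h | wordLength S (g * h) = wordLength S g + wordLength S h}


/-! ### Auxiliary development for Statement 4 -/

namespace DyerK4Aux

variable {V : Type u} [Fintype V] (Δ : DyerGraph V)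

/-- Generalized alternating word in an arbitrary monoid. -/
def altW {M : Type*} [Monoid M] : ℕ → M → M → M
  | 0, _, _ => 1
  | k + 1, a, b => a * altW k b a

lemma map_altWord {M : Type*} [Group M] (F : FreeGroup V →* M) :
    ∀ (k : ℕ) (a b : FreeGroup V), F (altWord k a b) = altW k (F a) (F b) := by
  intro k
  induction k with
  | zero => intro a b; simp [altWord, altW]
  | succ k ih => intro a b; simp [altWord, altW, map_mul, ih]

lemma altW_even {M : Type*} [CommMonoid M] (k : ℕ) (a b : M) :
    altW (2 * k) a b = (a * b) ^ k := by
  induction k generalizing a b with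
  | zero => simp [altW]
  | succ k ih =>
    have h2 : 2 * (k + 1) = (2 * k) + 1 + 1 := by ring
    rw [h2]
    show a * (b * altW (2 * k) a b) = (a * b) ^ (k + 1)
    rw [ih, pow_succ, mul_comm ((a*b)^k) (a*b)]
    rw [mul_assoc]

/-- The "odd edge" relation on vertices. -/
def oddRel (u v : V) : Prop := Δ.graph.Adj u v ∧ Odd (Δ.m u v)

lemma oddRel_f {u v : V} (h : oddRel Δ u v) : Δ.f u = 2 ∧ Δ.f v = 2 := by
  obtain ⟨hadj, hodd⟩ := h
  refine Δ.compat u v hadj ?_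
  intro hm
  rw [hm] at hodd
  exact (by decide : ¬ Odd 2) hodd

/-- Classes of vertices joined by odd edges. -/
def Cls := Quot (oddRel Δ)

def cls (v : V) : Cls Δ := Quot.mk _ v

lemma eqvgen_f {u v : V} (h : Relation.EqvGen (oddRel Δ) u v) :
    u = v ∨ (Δ.f u = 2 ∧ Δ.f v = 2) := by
  induction h with
  | rel a b hab => exact Or.inr (oddRel_f Δ hab)
  | refl a => exact Or.inl rfl
  | symm a b _ ih => tauto
  | trans a b c _ _ ih1 ih2 =>
    rcases ih1 with rfl | h1
    · exact ih2
    · rcases ih2 with rfl | h2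
      · exact Or.inr h1
      · exact Or.inr ⟨h1.1, h2.2⟩

lemma cls_eq_elim {u v : V} (h : cls Δ u = cls Δ v) :
    u = v ∨ (Δ.f u = 2 ∧ Δ.f v = 2) :=
  eqvgen_f Δ (Quot.eq.mp h)

/-- The modulus of a class. -/
def nbar : Cls Δ → ℕ :=
  Quot.lift (fun v => (Δ.f v).toNat)
    (fun u v h => by show (Δ.f u).toNat = (Δ.f v).toNat
                     rw [(oddRel_f Δ h).1, (oddRel_f Δ h).2])

lemma nbar_cls (v : V) : nbar Δ (cls Δ v) = (Δ.f v).toNat := rfl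

/-- The abelianized target. -/
abbrev Ab := (c : Cls Δ) → ZMod (nbar Δ c)

open Classical in
/-- Indicator vector of the class of `v`. -/
noncomputable def evec (v : V) : Ab Δ := fun c => if c = cls Δ v then 1 else 0

lemma evec_eq_of_cls_eq {u v : V} (h : cls Δ u = cls Δ v) : evec Δ u = evec Δ v := by
  funext c; unfold evec; rw [h]

lemma evec_apply_self (v : V) : evec Δ v (cls Δ v) = 1 := if_pos rfl

lemma evec_apply_ne {v : V} {c : Cls Δ} (h : c ≠ cls Δ v) : evec Δ v c = 0 := if_neg h

lemma zsmul_evec_apply_self (a : ℤ) (v : V) :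
    (a • evec Δ v) (cls Δ v) = ((a : ZMod (nbar Δ (cls Δ v)))) := by
  rw [Pi.smul_apply, evec_apply_self, zsmul_eq_mul, mul_one]

lemma zsmul_evec_apply_ne (a : ℤ) {v : V} {c : Cls Δ} (h : c ≠ cls Δ v) :
    (a • evec Δ v) c = 0 := by
  rw [Pi.smul_apply, evec_apply_ne Δ h, smul_zero]

lemma rels_check :
    ∀ r ∈ Δ.rels,
      (FreeGroup.lift (fun v => Multiplicative.ofAdd (evec Δ v))) r = 1 := by
  rintro r (⟨v, n, hfv, rfl⟩ | ⟨u, v, hadj, rfl⟩)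
  · rw [map_pow, FreeGroup.lift_apply_of, ← ofAdd_nsmul]
    have hz : n • evec Δ v = 0 := by
      funext c
      by_cases hc : c = cls Δ v
      · subst hc
        have hn : nbar Δ (cls Δ v) = n := by rw [nbar_cls, hfv, ENat.toNat_coe]
        rw [Pi.smul_apply, Pi.zero_apply, evec_apply_self, nsmul_eq_mul, mul_one]
        rw [show ((n : ZMod (nbar Δ (cls Δ v)))) = 0 from by
          rw [← hn]; exact ZMod.natCast_self _]
      · rw [Pi.smul_apply, Pi.zero_apply, evec_apply_ne Δ hc, smul_zero]
    rw [hz]; rfl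
  · rw [map_mul, map_inv, map_altWord, map_altWord, FreeGroup.lift_apply_of, FreeGroup.lift_apply_of]
    suffices h : altW (Δ.m u v) (Multiplicative.ofAdd (evec Δ u)) (Multiplicative.ofAdd (evec Δ v))
        = altW (Δ.m u v) (Multiplicative.ofAdd (evec Δ v)) (Multiplicative.ofAdd (evec Δ u)) by
      rw [h, mul_inv_cancel]
    rcases Nat.even_or_odd (Δ.m u v) with he | ho
    · obtain ⟨k, hk⟩ := he
      rw [show Δ.m u v = 2 * k from by omega, altW_even, altW_even, mul_comm]
    · have : cls Δ u = cls Δ v := Quot.sound ⟨hadj, ho⟩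
      rw [evec_eq_of_cls_eq Δ this]

/-- The abelianization-type homomorphism used to separate syllables. -/
noncomputable def ψ : DyerGroup Δ →* Multiplicative (Ab Δ) :=
  PresentedGroup.toGroup (rels_check Δ)

lemma psi_gen (v : V) : ψ Δ (Δ.gen v) = Multiplicative.ofAdd (evec Δ v) :=
  PresentedGroup.toGroup.of _

lemma psi_gen_zpow (v : V) (a : ℤ) :
    ψ Δ (Δ.gen v ^ a) = Multiplicative.ofAdd (a • evec Δ v) := by
  rw [map_zpow, psi_gen, ← ofAdd_zsmul]

/-- The key additive equation extracted from a product relation among syllables. -/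
lemma key_eq {t w s : V} {c a d : ℤ}
    (h : (Δ.gen t ^ c)⁻¹ * Δ.gen w ^ a = Δ.gen s ^ d) :
    a • evec Δ w - c • evec Δ t = d • evec Δ s := by
  have h2 := congrArg (ψ Δ) h
  rw [map_mul, map_inv, psi_gen_zpow, psi_gen_zpow, psi_gen_zpow,
    ← ofAdd_neg, ← ofAdd_add] at h2
  have h3 := Multiplicative.ofAdd.injective h2
  rw [← h3]; abel

lemma gen_pow_eq_one {v : V} {n : ℕ} (hfv : Δ.f v = (n : ℕ∞)) :
    Δ.gen v ^ (n : ℤ) = 1 := by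
  rw [zpow_natCast]
  show (PresentedGroup.of v : PresentedGroup Δ.rels) ^ n = 1
  have : (PresentedGroup.of v : PresentedGroup Δ.rels) ^ n
      = QuotientGroup.mk (FreeGroup.of v ^ n) := rfl
  rw [this]; refine (QuotientGroup.eq_one_iff (N := Subgroup.normalClosure Δ.rels) _).mpr ?_
  exact Subgroup.subset_normalClosure (Or.inl ⟨v, n, hfv, rfl⟩)

lemma gen_zpow_eq_one {v : V} {n : ℕ} (hfv : Δ.f v = (n : ℕ∞)) {a : ℤ}
    (hdvd : (n : ℤ) ∣ a) : Δ.gen v ^ a = 1 := by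
  obtain ⟨k, rfl⟩ := hdvd
  rw [zpow_mul, gen_pow_eq_one Δ hfv, one_zpow]

/-- Extraction of the syllable data from membership in `X_S`. -/
lemma XS_extract {x : DyerGroup Δ} (h : x ∈ Δ.XS) :
    ∃ (v : V) (a : ℤ), x = Δ.gen v ^ a ∧
      ((a : ZMod (nbar Δ (cls Δ v))) ≠ 0) ∧
      (∀ n : ℕ, Δ.f v = (n : ℕ∞) → ¬ ((n : ℤ) ∣ a)) ∧
      (Δ.f v = ⊤ → a = 1 ∨ a = -1) := by
  obtain ⟨v, (⟨n, hfv, a, hna, rfl⟩ | ⟨hfv, hg⟩)⟩ := h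
  · refine ⟨v, a, rfl, ?_, ?_, ?_⟩
    · rw [Ne, ZMod.intCast_zmod_eq_zero_iff_dvd]
      rw [nbar_cls, hfv, ENat.toNat_coe]
      exact hna
    · intro n' hfv'
      rw [hfv] at hfv'
      have : n = n' := by exact_mod_cast hfv'
      rw [← this]; exact hna
    · intro htop; rw [hfv] at htop; simp at htop
  · have hnb : nbar Δ (cls Δ v) = 0 := by rw [nbar_cls, hfv, ENat.toNat_top]
    rcases hg with rfl | rfl
    · refine ⟨v, 1, by rw [zpow_one], ?_, ?_, fun _ => Or.inl rfl⟩
      · rw [Ne, ZMod.intCast_zmod_eq_zero_iff_dvd, hnb]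
        simp
      · intro n hfv'; rw [hfv] at hfv'; simp at hfv'
    · refine ⟨v, -1, by rw [zpow_neg_one], ?_, ?_, fun _ => Or.inr rfl⟩
      · rw [Ne, ZMod.intCast_zmod_eq_zero_iff_dvd, hnb]
        simp
      · intro n hfv'; rw [hfv] at hfv'; simp at hfv'

lemma XS_inv {x : DyerGroup Δ} (h : x ∈ Δ.XS) : x⁻¹ ∈ Δ.XS := by
  obtain ⟨v, (⟨n, hfv, a, hna, rfl⟩ | ⟨hfv, hg⟩)⟩ := h
  · exact ⟨v, Or.inl ⟨n, hfv, -a, by rwa [dvd_neg], by rw [zpow_neg]⟩⟩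
  · rcases hg with rfl | rfl
    · exact ⟨v, Or.inr ⟨hfv, Or.inr rfl⟩⟩
    · exact ⟨v, Or.inr ⟨hfv, Or.inl (by rw [inv_inv])⟩⟩

lemma adj_mem {a b : DyerGroup Δ} (h : (cayley (DyerGroup Δ) Δ.XS).Adj a b) :
    a⁻¹ * b ∈ Δ.XS := by
  rw [cayley, SimpleGraph.fromRel_adj] at h
  rcases h.2 with hm | hm
  · exact hm
  · have := XS_inv Δ hm
    rwa [mul_inv_rev, inv_inv] at this

/-- From the additive equation with nonvanishing coefficients, the classes of
the first two vertices agree. -/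

lemma top_ne_two : (⊤ : ℕ∞) ≠ 2 := by decide

lemma int_cast_inj_of_eq_zero {N : ℕ} (hN : N = 0) {x y : ℤ}
    (h : ((x : ZMod N)) = ((y : ZMod N))) : x = y := by
  have h0 : ((x - y : ℤ) : ZMod N) = 0 := by push_cast; rw [h]; ring
  rw [ZMod.intCast_zmod_eq_zero_iff_dvd, hN] at h0
  have : x - y = 0 := by simpa using h0
  omega

/-- The dihedral obstruction: two odd syllables from the same odd class cannot
multiply into a syllable. -/
lemma no_two_odd {t w s : V} {c a d : ℤ}
    (heq : a • evec Δ w - c • evec Δ t = d • evec Δ s)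
    (hd : ((d : ZMod (nbar Δ (cls Δ s)))) ≠ 0)
    (hft : Δ.f t = 2) (hfw : Δ.f w = 2)
    (hwt : cls Δ w = cls Δ t)
    (ha : ¬ (((2:ℕ) : ℤ)) ∣ a) (hc : ¬ (((2:ℕ) : ℤ)) ∣ c) : False := by
  rw [evec_eq_of_cls_eq Δ hwt.symm, ← sub_smul] at heq
  have h1 := congrFun heq (cls Δ s)
  rw [zsmul_evec_apply_self] at h1
  apply hd
  rw [← h1]
  by_cases hsw : cls Δ s = cls Δ w
  · rw [hsw, zsmul_evec_apply_self]
    rw [ZMod.intCast_zmod_eq_zero_iff_dvd]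
    have hnb : nbar Δ (cls Δ w) = 2 := by
      rw [nbar_cls, hfw]; rfl
    rw [hnb]
    have ha' : ¬ (2:ℤ) ∣ a := by exact_mod_cast ha
    have hc' : ¬ (2:ℤ) ∣ c := by exact_mod_cast hc
    omega
  · rw [zsmul_evec_apply_ne Δ _ hsw]

lemma cls_eq_of_key {t w s : V} {c a d : ℤ}
    (heq : a • evec Δ w - c • evec Δ t = d • evec Δ s)
    (ha : (a : ZMod (nbar Δ (cls Δ w))) ≠ 0)
    (hc : (c : ZMod (nbar Δ (cls Δ t))) ≠ 0) :
    cls Δ w = cls Δ t := by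
  by_contra hwt
  have h1 := congrFun heq (cls Δ w)
  have h2 := congrFun heq (cls Δ t)
  rw [Pi.sub_apply, zsmul_evec_apply_self, zsmul_evec_apply_ne Δ c hwt, sub_zero] at h1
  rw [Pi.sub_apply, zsmul_evec_apply_ne Δ a (fun hh => hwt hh.symm),
    zsmul_evec_apply_self, zero_sub] at h2
  by_cases hws : cls Δ w = cls Δ s
  · by_cases hts : cls Δ t = cls Δ s
    · exact hwt (hws.trans hts.symm)
    · rw [zsmul_evec_apply_ne Δ d hts] at h2
      exact hc (neg_eq_zero.mp h2)
  · rw [zsmul_evec_apply_ne Δ d hws] at h1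
    exact ha h1
end DyerK4Aux

open DyerK4Aux in
/-- The Cayley graph `Cay(D, X_S)` of a Dyer group contains no induced
copy of `K₄` minus an edge. -/
theorem dyer_cayley_XS_noK4minus {V : Type u} [Fintype V] (Δ : DyerGraph V) :
    NoInducedK4Minus (cayley (DyerGroup Δ) Δ.XS) := by
  rintro ⟨g, h, p, q, hgh, hgp, hgq, hhp, hhq, hpq, agh, agp, agq, ahp, ahq, hnadj⟩
  obtain ⟨t, c, hz, hcne, hcfin, hctop⟩ := XS_extract Δ (adj_mem Δ agh)
  obtain ⟨w, a, hx, hane, hafin, hatop⟩ := XS_extract Δ (adj_mem Δ agp)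
  obtain ⟨w', b, hy, hbne, hbfin, hbtop⟩ := XS_extract Δ (adj_mem Δ agq)
  obtain ⟨s, d, hzx, hdne, hdfin, hdtop⟩ := XS_extract Δ (adj_mem Δ ahp)
  obtain ⟨s', d', hzy, hd'ne, hd'fin, hd'top⟩ := XS_extract Δ (adj_mem Δ ahq)
  have ezx : (Δ.gen t ^ c)⁻¹ * Δ.gen w ^ a = Δ.gen s ^ d := by
    rw [← hz, ← hx, ← hzx]; group
  have ezy : (Δ.gen t ^ c)⁻¹ * Δ.gen w' ^ b = Δ.gen s' ^ d' := by
    rw [← hz, ← hy, ← hzy]; group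
  have eq1 := key_eq Δ ezx
  have eq2 := key_eq Δ ezy
  have hwt : cls Δ w = cls Δ t := cls_eq_of_key Δ eq1 hane hcne
  have hw't : cls Δ w' = cls Δ t := cls_eq_of_key Δ eq2 hbne hcne
  by_cases hww' : w = w'
  · subst hww'
    have hxy : p⁻¹ * q = Δ.gen w ^ (b - a) := by
      have hh : (g⁻¹ * p)⁻¹ * (g⁻¹ * q) = p⁻¹ * q := by group
      rw [← hh, hx, hy, ← zpow_neg, ← zpow_add, neg_add_eq_sub]
    by_cases hfw : Δ.f w = ⊤
    · -- infinite order generator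
      have htw : w = t := by
        rcases cls_eq_elim Δ hwt with h' | ⟨h2, _⟩
        · exact h'
        · rw [hfw] at h2; exact absurd h2 top_ne_two
      subst htw
      have hnb : nbar Δ (cls Δ w) = 0 := by rw [nbar_cls, hfw]; rfl
      rw [← sub_smul] at eq1
      by_cases hsw : cls Δ w = cls Δ s
      · have hsw' : w = s := by
          rcases cls_eq_elim Δ hsw with h' | ⟨h2, _⟩
          · exact h'
          · rw [hfw] at h2; exact absurd h2 top_ne_two
        subst hsw'
        have h1 := congrFun eq1 (cls Δ w)
        rw [zsmul_evec_apply_self, zsmul_evec_apply_self] at h1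
        have had : a - c = d := int_cast_inj_of_eq_zero hnb h1
        rcases hatop hfw with rfl | rfl <;> rcases hctop hfw with rfl | rfl <;>
          rcases hdtop hfw with hd1 | hd1 <;> omega
      · have h1 := congrFun eq1 (cls Δ w)
        rw [zsmul_evec_apply_self, zsmul_evec_apply_ne Δ d hsw] at h1
        rw [ZMod.intCast_zmod_eq_zero_iff_dvd, hnb] at h1
        have hac : a = c := by
          have : a - c = 0 := by simpa using h1
          omega
        apply hhp
        have hgp' : g⁻¹ * h = g⁻¹ * p := by rw [hz, hx, hac]
        exact mul_left_cancel hgp'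
    · obtain ⟨n, hn⟩ := WithTop.ne_top_iff_exists.mp hfw
      by_cases hdvd : (n : ℤ) ∣ (b - a)
      · have h1 : p⁻¹ * q = 1 := by rw [hxy]; exact gen_zpow_eq_one Δ hn.symm hdvd
        exact hpq (inv_mul_eq_one.mp h1)
      · exact hnadj ((SimpleGraph.fromRel_adj _ p q).mpr
          ⟨hpq, Or.inl ⟨w, Or.inl ⟨n, hn.symm, b - a, hdvd, hxy⟩⟩⟩)
  · have hcls : cls Δ w = cls Δ w' := hwt.trans hw't.symm
    have hff : Δ.f w = 2 ∧ Δ.f w' = 2 := by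
      rcases cls_eq_elim Δ hcls with h' | h'
      · exact absurd h' hww'
      · exact h'
    rcases eq_or_ne t w with htw | htw
    · -- t = w ≠ w' : use the pair (w', t)
      have hft : Δ.f t = 2 := htw ▸ hff.1
      exact no_two_odd Δ eq2 hd'ne hft hff.2 hw't
        (hbfin 2 (by exact_mod_cast hff.2)) (hcfin 2 (by exact_mod_cast hft))
    · have hft : Δ.f w = 2 ∧ Δ.f t = 2 := by
        rcases cls_eq_elim Δ hwt with h' | h'
        · exact absurd h'.symm htw
        · exact h'
      exact no_two_odd Δ eq1 hdne hft.2 hft.1 hwt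
        (hafin 2 (by exact_mod_cast hft.1)) (hcfin 2 (by exact_mod_cast hft.2))
end

section
/- Let D = D(𝒢,m,f) be a Dyer group, M := max{m(e) : e ∈ E(𝒢)}, and let γ = (v_0,…,v_n) be a path in Cay(D,X_S). Suppose 𝒞 is a dihedral cycle of length 2m such that γ ∩ 𝒞 is the subpath (v_i, v_{i+1},…,v_{i+m}) of γ, a subsegment of 𝒞 of length m = ℓ(𝒞)/2. Let γ̃ = (v_0,…,v_i, ṽ_{i+1},…,ṽ_{i+m−1}, v_{i+m},…,v_n) be the path obtained by replacing this subsegment with the complementary arc 𝒞 ∖ (v_i,…,v_{i+m}) of 𝒞 (the flip). Then ℓ(γ̃) = ℓ(γ) and the paths γ and γ̃ M-fellow travel. -/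
universe u

/-- Walking forward `t` steps along a cycle bounds the distance by `t`. -/
lemma cycle_dist_le {W : Type*} {Γ : SimpleGraph W} (c : GraphCycle Γ)
    (a : ZMod c.len) (t : ℕ) :
    Γ.dist (c.toFun a) (c.toFun (a + (t : ZMod c.len))) ≤ t := by
  have h : ∀ t : ℕ, ∃ w : Γ.Walk (c.toFun a) (c.toFun (a + (t : ZMod c.len))),
      w.length = t := by
    intro t
    induction t with
    | zero =>
      rw [Nat.cast_zero, add_zero]
      exact ⟨SimpleGraph.Walk.nil, rfl⟩
    | succ t ih =>
      obtain ⟨w, hw⟩ := ih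
      rw [Nat.cast_add, Nat.cast_one, ← add_assoc]
      exact ⟨w.concat (c.adj (a + (t : ZMod c.len))),
        by simp [SimpleGraph.Walk.length_concat, hw]⟩
  obtain ⟨w, hw⟩ := h t
  exact le_of_le_of_eq (SimpleGraph.dist_le w) hw


/-- Applying a flip around a dihedral cycle `𝒞` of length `2m` to a
path `γ` of `Cay(D, X_S)` whose intersection with `𝒞` is a subsegment of `𝒞` of length
`m = ℓ(𝒞)/2` yields a path of the same length which `M`-fellow travels `γ`, where
`M = max{m(e) : e ∈ E(𝒢)}`. -/
theorem dyer_flip {V : Type u} [Fintype V] (Δ : DyerGraph V) (M : ℕ)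
    (hM : M = sSup {n : ℕ | ∃ u v : V, Δ.graph.Adj u v ∧ Δ.m u v = n})
    (γ : GraphPath (cayley (DyerGroup Δ) Δ.XS))
    (C : GraphCycle (cayley (DyerGroup Δ) Δ.XS)) (hC : Δ.IsDihedral C)
    (k : ℕ) (hlen : C.len = 2 * k)
    (i : ℕ) (hik : i + k ≤ γ.len) (j : ZMod C.len)
    (hsub : ∀ t : ℕ, t ≤ k → γ.toFun (i + t) = C.toFun (j + (t : ZMod C.len)))
    (hexact : ∀ t : ℕ, t ≤ γ.len → γ.toFun t ∈ Set.range C.toFun →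
      i ≤ t ∧ t ≤ i + k) :
    ∃ γ' : GraphPath (cayley (DyerGroup Δ) Δ.XS),
      γ'.len = γ.len ∧
      (∀ t : ℕ, t ≤ i → γ'.toFun t = γ.toFun t) ∧
      (∀ t : ℕ, i + k ≤ t → γ'.toFun t = γ.toFun t) ∧
      (∀ t : ℕ, t ≤ k → γ'.toFun (i + t) = C.toFun (j - (t : ZMod C.len))) ∧
      FellowTravel M γ γ' := by
  classical
  obtain ⟨u, v, huv, hCm, -⟩ := hC
  have hkm : k = Δ.m u v := by omega
  have hk2 : 2 ≤ k := hkm ▸ Δ.two_le_m u v huv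
  have hkM : k ≤ M := by
    subst hM
    have hfin : {n : ℕ | ∃ u v : V, Δ.graph.Adj u v ∧ Δ.m u v = n}.Finite :=
      (Set.finite_range (fun p : V × V => Δ.m p.1 p.2)).subset
        (by rintro n ⟨u, v, -, rfl⟩; exact ⟨(u, v), rfl⟩)
    exact le_csSup hfin.bddAbove ⟨u, v, huv, hkm.symm⟩
  have h2k : ((2 * k : ℕ) : ZMod C.len) = 0 := by
    rw [← hlen]; exact ZMod.natCast_self _
  have hkk : j + (k : ZMod C.len) = j - (k : ZMod C.len) := by
    rw [eq_sub_iff_add_eq, add_assoc, ← Nat.cast_add]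
    have : k + k = 2 * k := by omega
    rw [this, h2k, add_zero]
  set G : ℕ → DyerGroup Δ := fun t =>
    if i < t ∧ t < i + k then C.toFun (j - ((t - i : ℕ) : ZMod C.len))
    else γ.toFun t with hG
  have hval : ∀ t : ℕ, i ≤ t → t ≤ i + k →
      G t = C.toFun (j - ((t - i : ℕ) : ZMod C.len)) := by
    intro t h1 h2
    by_cases hlt : i < t ∧ t < i + k
    · simp only [hG, if_pos hlt]
    · simp only [hG, if_neg hlt]
      rcases (by omega : t = i ∨ t = i + k) with rfl | rfl
      · have := hsub 0 (by omega)
        simpa using this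
      · have h3 : i + k - i = k := by omega
        rw [h3, hsub k le_rfl, hkk]
  have hout : ∀ t : ℕ, t ≤ i ∨ i + k ≤ t → G t = γ.toFun t := by
    intro t ht
    simp only [hG, if_neg (by omega : ¬(i < t ∧ t < i + k))]
  refine ⟨⟨γ.len, G, ?_, ?_⟩, rfl, fun t ht => hout t (Or.inl ht),
      fun t ht => hout t (Or.inr ht), ?_, ?_⟩
  · -- adjacency
    intro t ht
    by_cases h1 : t + 1 ≤ i
    · rw [hout t (by omega), hout (t + 1) (by omega)]
      exact γ.adj t ht
    by_cases h2 : i + k ≤ t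
    · rw [hout t (by omega), hout (t + 1) (by omega)]
      exact γ.adj t ht
    · have e1 := hval t (by omega) (by omega)
      have e2 := hval (t + 1) (by omega) (by omega)
      have hs : (t + 1 - i : ℕ) = (t - i) + 1 := by omega
      rw [hs, Nat.cast_add, Nat.cast_one] at e2
      rw [e1, e2]
      have hadj := C.adj (j - (((t - i : ℕ) : ZMod C.len) + 1))
      have heq : j - (((t - i : ℕ) : ZMod C.len) + 1) + 1
          = j - ((t - i : ℕ) : ZMod C.len) := by ring
      rw [heq] at hadj
      exact hadj.symm
  · -- stable
    intro t ht
    rw [hout t (by omega), hout γ.len (by omega)]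
    exact γ.stable t ht
  · -- matches the complementary arc
    intro t ht
    have := hval (i + t) (by omega) (by omega)
    rwa [(by omega : i + t - i = t)] at this
  · -- fellow travelling
    intro t
    by_cases hlt : i < t ∧ t < i + k
    · set s : ℕ := t - i with hsdef
      have hs1 : 1 ≤ s := by omega
      have hsk : s ≤ k := by omega
      have hγ : γ.toFun t = C.toFun (j + (s : ZMod C.len)) := by
        have := hsub s hsk
        rwa [(by omega : i + s = t)] at this
      have hγ' : G t = C.toFun (j - (s : ZMod C.len)) := hval t (by omega) (by omega)
      have d1 := cycle_dist_le C (j - (s : ZMod C.len)) (2 * s)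
      have e1 : j - (s : ZMod C.len) + ((2 * s : ℕ) : ZMod C.len)
          = j + (s : ZMod C.len) := by push_cast; ring
      rw [e1] at d1
      have d2 := cycle_dist_le C (j + (s : ZMod C.len)) (2 * (k - s))
      have e2 : j + (s : ZMod C.len) + ((2 * (k - s) : ℕ) : ZMod C.len)
          = j - (s : ZMod C.len) := by
        have hz : ((2 * (k - s) : ℕ) : ZMod C.len) + ((2 * s : ℕ) : ZMod C.len)
            = 0 := by
          rw [← Nat.cast_add, (by omega : 2 * (k - s) + 2 * s = 2 * k), h2k]
        push_cast at hz ⊢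
        linear_combination hz
      rw [e2] at d2
      rw [SimpleGraph.dist_comm] at d1
      show (cayley (DyerGroup Δ) Δ.XS).dist (γ.toFun t) (G t) ≤ M
      rw [hγ, hγ']
      omega
    · show (cayley (DyerGroup Δ) Δ.XS).dist (γ.toFun t) (G t) ≤ M
      rw [hout t (by omega), SimpleGraph.dist_self]
      exact Nat.zero_le M
end

section
/- Let D = D(𝒢,m,f) be a Dyer group. In Cay(D,S(X)), every 3-cycle has each of its edges labelled by the same vertex group: if g, h, k are three pairwise adjacent vertices of Cay(D,S(X)), then there exists a vertex v ∈ V(𝒢) such that g⁻¹h, h⁻¹k and g⁻¹k all belong to the vertex group {x_v^α : α ∈ ℤ_{f(v)} ∖ {0}} of x_v. -/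
universe u

open scoped Classical

namespace DyerAux

variable {V : Type u} [Fintype V]

/-- odd-labelled adjacency -/
def OddAdj (Δ : DyerGraph V) (a b : V) : Prop := Δ.graph.Adj a b ∧ ¬ 2 ∣ Δ.m a b

/-- odd component relation -/
def OC (Δ : DyerGraph V) : V → V → Prop := Relation.EqvGen (OddAdj Δ)

lemma oc_refl (Δ : DyerGraph V) (a : V) : OC Δ a a := Relation.EqvGen.refl a

lemma oc_symm {Δ : DyerGraph V} {a b : V} (h : OC Δ a b) : OC Δ b a :=
  Relation.EqvGen.symm a b h

lemma oc_trans {Δ : DyerGraph V} {a b c : V} (h : OC Δ a b) (h' : OC Δ b c) : OC Δ a c :=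
  Relation.EqvGen.trans a b c h h'

lemma oc_two {Δ : DyerGraph V} {a b : V} (h : OC Δ a b) :
    a = b ∨ (Δ.f a = 2 ∧ Δ.f b = 2) := by
  induction h with
  | rel x y hxy =>
      right
      exact Δ.compat x y hxy.1 (fun hm => hxy.2 ⟨1, by omega⟩)
  | refl x => left; rfl
  | symm x y _ ih => tauto
  | trans x y z _ _ ih1 ih2 =>
      rcases ih1 with rfl | ⟨h1, h2⟩
      · exact ih2
      · rcases ih2 with rfl | ⟨h3, h4⟩
        · exact Or.inr ⟨h1, h2⟩
        · exact Or.inr ⟨h1, h4⟩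

lemma oc_f {Δ : DyerGraph V} {a b : V} (h : OC Δ a b) : Δ.f a = Δ.f b := by
  rcases oc_two h with rfl | ⟨h1, h2⟩ <;> simp [*]

/-- the modulus -/
def Nn (Δ : DyerGraph V) (v : V) : ℕ := (Δ.f v).toNat

/-- indicator of odd component -/
noncomputable def eps (Δ : DyerGraph V) (t s : V) : ZMod (Nn Δ t) :=
  if OC Δ t s then 1 else 0

lemma map_altWord {G : Type*} [CommGroup G] (F : FreeGroup V →* G) :
    ∀ (k : ℕ) (a b : FreeGroup V), F (altWord k a b) = F a ^ ((k + 1) / 2) * F b ^ (k / 2)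
  | 0, a, b => by simp [altWord]
  | (k + 1), a, b => by
      rw [altWord, map_mul, map_altWord F k b a,
        show (k + 1 + 1) / 2 = k / 2 + 1 by omega, pow_succ]
      simp [mul_comm, mul_left_comm, mul_assoc]

lemma relcheck (Δ : DyerGraph V) (t : V) :
    ∀ r ∈ Δ.rels, FreeGroup.lift (fun s => Multiplicative.ofAdd (eps Δ t s)) r = 1 := by
  rintro r (⟨v, n, hfv, rfl⟩ | ⟨p, q, hadj, rfl⟩)
  · rw [map_pow, FreeGroup.lift_apply_of]
    by_cases h : OC Δ t v
    · have hN : Nn Δ t = n := by rw [Nn, oc_f h, hfv, ENat.toNat_coe]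
      subst hN
      rw [eps, if_pos h, ← ofAdd_nsmul, nsmul_eq_mul, mul_one, ZMod.natCast_self, ofAdd_zero]
    · rw [eps, if_neg h, ofAdd_zero, one_pow]
  · rw [map_mul, map_inv, map_altWord, map_altWord, FreeGroup.lift_apply_of, FreeGroup.lift_apply_of,
      mul_inv_eq_one]
    by_cases hm : 2 ∣ Δ.m p q
    · rw [show (Δ.m p q + 1) / 2 = Δ.m p q / 2 by omega, mul_comm]
    · have hpq : eps Δ t p = eps Δ t q := by
        by_cases h : OC Δ t p
        · rw [eps, if_pos h, eps, if_pos (oc_trans h (Relation.EqvGen.rel p q ⟨hadj, hm⟩))]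
        · rw [eps, if_neg h, eps, if_neg
            (fun hq => h (oc_trans hq (Relation.EqvGen.symm _ _ (Relation.EqvGen.rel p q ⟨hadj, hm⟩))))]
      rw [hpq, mul_comm]

noncomputable def phi (Δ : DyerGraph V) (t : V) :
    DyerGroup Δ →* Multiplicative (ZMod (Nn Δ t)) :=
  PresentedGroup.toGroup (relcheck Δ t)

lemma phi_gen (Δ : DyerGraph V) (t s : V) :
    phi Δ t (Δ.gen s) = Multiplicative.ofAdd (eps Δ t s) :=
  PresentedGroup.toGroup.of _

noncomputable def psi (Δ : DyerGraph V) (t : V) (x : DyerGroup Δ) : ZMod (Nn Δ t) :=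
  Multiplicative.toAdd (phi Δ t x)

lemma psi_pow (Δ : DyerGraph V) (t s : V) (a : ℤ) :
    psi Δ t (Δ.gen s ^ a) = a * eps Δ t s := by
  rw [psi, map_zpow, phi_gen, toAdd_zpow, toAdd_ofAdd, zsmul_eq_mul]

lemma key {Δ : DyerGraph V} {u v w : V} {α β γ : ℤ}
    (hE : Δ.gen u ^ α * Δ.gen v ^ β = Δ.gen w ^ γ) (t : V) :
    (α : ZMod (Nn Δ t)) * eps Δ t u + (β : ZMod (Nn Δ t)) * eps Δ t v
      = (γ : ZMod (Nn Δ t)) * eps Δ t w := by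
  have h := congrArg (psi Δ t) hE
  rw [psi, map_mul, toAdd_mul, ← psi, ← psi, psi_pow, psi_pow, psi_pow] at h
  exact h

lemma mem_vg {Δ : DyerGraph V} {v : V} {x : DyerGroup Δ} :
    x ∈ Δ.vertexGroup v ↔ ∃ a : ℤ, ¬((Nn Δ v : ℤ) ∣ a) ∧ x = Δ.gen v ^ a := by
  rw [DyerGraph.vertexGroup, Set.mem_setOf_eq, Nn]
  rcases eq_or_ne (Δ.f v) ⊤ with hf | hf
  · simp [hf]
  · obtain ⟨n, hn'⟩ := WithTop.ne_top_iff_exists.mp hf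
    have hn : (n : ℕ∞) = Δ.f v := hn'
    simp [← hn, Nat.cast_inj]

lemma gen_pow_N (Δ : DyerGraph V) (v : V) : Δ.gen v ^ ((Nn Δ v : ℤ)) = 1 := by
  rcases eq_or_ne (Δ.f v) ⊤ with hf | hf
  · simp [Nn, hf]
  · obtain ⟨n, hn'⟩ := WithTop.ne_top_iff_exists.mp hf
    have hn : (n : ℕ∞) = Δ.f v := hn'
    have hr : (FreeGroup.of v ^ n : FreeGroup V) ∈ Δ.rels := Or.inl ⟨v, n, hn.symm, rfl⟩
    have h1 : PresentedGroup.mk Δ.rels (FreeGroup.of v ^ n) = 1 :=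
      (QuotientGroup.eq_one_iff _).mpr (Subgroup.subset_normalClosure hr)
    have h2 : Δ.gen v ^ n = 1 := by
      rw [DyerGraph.gen, PresentedGroup.of, ← map_pow] at *
      exact h1
    simp [Nn, ← hn, ENat.toNat_coe, zpow_natCast, h2]

end DyerAux

namespace DyerAux

lemma inv_mem {V : Type u} [Fintype V] {Δ : DyerGraph V} {v : V} {x : DyerGroup Δ}
    (h : x ∈ Δ.vertexGroup v) : x⁻¹ ∈ Δ.vertexGroup v := by
  rw [mem_vg] at h ⊢
  obtain ⟨a, ha, rfl⟩ := h
  exact ⟨-a, fun hd => ha ((dvd_neg).mp hd), by rw [← zpow_neg]⟩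

lemma adj_syll {V : Type u} [Fintype V] {Δ : DyerGraph V} {x y : DyerGroup Δ}
    (hxy : (cayley (DyerGroup Δ) Δ.SX).Adj x y) : ∃ v : V, x⁻¹ * y ∈ Δ.vertexGroup v := by
  rw [cayley, SimpleGraph.fromRel_adj] at hxy
  rcases hxy.2 with h | h
  · exact h
  · obtain ⟨v, hv⟩ := h
    exact ⟨v, by simpa using inv_mem hv⟩

lemma zmod_cast_ne {N : ℕ} {a : ℤ} (h : ¬ ((N : ℤ) ∣ a)) : (a : ZMod N) ≠ 0 :=
  fun hc => h ((ZMod.intCast_zmod_eq_zero_iff_dvd a N).mp hc)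

end DyerAux


open DyerAux

/-- In `Cay(D, S(X))`, every `3`-cycle has each of its edges labelled
by the same vertex group: if `g, h, k` are pairwise adjacent, there is a vertex `v` of
the Dyer graph with `g⁻¹h, h⁻¹k, g⁻¹k` all in the vertex group of `x_v`. -/
theorem dyer_cayley_SX_triangle_labels {V : Type u} [Fintype V] (Δ : DyerGraph V)
    (g h k : DyerGroup Δ)
    (hgh : (cayley (DyerGroup Δ) Δ.SX).Adj g h)
    (hhk : (cayley (DyerGroup Δ) Δ.SX).Adj h k)
    (hgk : (cayley (DyerGroup Δ) Δ.SX).Adj g k) :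
    ∃ v : V, g⁻¹ * h ∈ Δ.vertexGroup v ∧ h⁻¹ * k ∈ Δ.vertexGroup v ∧
      g⁻¹ * k ∈ Δ.vertexGroup v := by
  
  classical
  obtain ⟨u, hu⟩ := adj_syll hgh
  obtain ⟨v, hv⟩ := adj_syll hhk
  obtain ⟨w, hw⟩ := adj_syll hgk
  have hu' := hu; have hv' := hv; have hw' := hw
  rw [mem_vg] at hu' hv' hw'
  obtain ⟨α, hα, hEu⟩ := hu'
  obtain ⟨β, hβ, hEv⟩ := hv'
  obtain ⟨γ, hγ, hEw⟩ := hw'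
  have hE : Δ.gen u ^ α * Δ.gen v ^ β = Δ.gen w ^ γ := by
    rw [← hEu, ← hEv, ← hEw]; group
  by_cases huv : u = v
  · subst huv
    have hc : Δ.gen u ^ (α + β) = Δ.gen w ^ γ := by rw [zpow_add]; exact hE
    by_cases hdvd : ((Nn Δ u : ℤ)) ∣ (α + β)
    · exfalso
      obtain ⟨c, hc'⟩ := hdvd
      have h1 : Δ.gen w ^ γ = 1 := by
        rw [← hc, hc', zpow_mul, gen_pow_N, one_zpow]
      have h2 := congrArg (psi Δ w) h1
      rw [psi_pow, eps, if_pos (oc_refl Δ w), mul_one, psi, map_one, toAdd_one] at h2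
      exact zmod_cast_ne hγ h2
    · refine ⟨u, hu, hv, ?_⟩
      rw [mem_vg]
      refine ⟨α + β, hdvd, ?_⟩
      rw [zpow_add, ← hEu, ← hEv]; group
  · exfalso
    by_cases hOC : OC Δ u v
    · obtain rfl | ⟨hfu, hfv⟩ := oc_two hOC
      · exact huv rfl
      have hNu : Nn Δ u = 2 := by
        rw [Nn, hfu]; rfl
      by_cases hOw : OC Δ u w
      · -- all in same odd component, all moduli 2, parity contradiction
        have hfw : Δ.f w = 2 := (oc_f hOw) ▸ hfu
        have hNv : Nn Δ v = 2 := by rw [Nn, hfv]; rfl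
        have hNw : Nn Δ w = 2 := by rw [Nn, hfw]; rfl
        have E := key hE u
        rw [eps, if_pos (oc_refl Δ u), eps, if_pos hOC, eps, if_pos hOw] at E
        have E' : ((α + β - γ : ℤ) : ZMod (Nn Δ u)) = 0 := by
          push_cast
          rw [mul_one, mul_one, mul_one] at E
          rw [E]; ring
        have hd : ((Nn Δ u : ℤ)) ∣ (α + β - γ) :=
          (ZMod.intCast_zmod_eq_zero_iff_dvd _ _).mp E'
        rw [hNu] at hd
        rw [hNu] at hα
        rw [hNv] at hβ
        rw [hNw] at hγ
        omega
      · have hOw' : ¬ OC Δ v w := fun hh => hOw (oc_trans hOC hh)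
        have E := key hE w
        rw [eps, if_neg (fun hh => hOw (oc_symm hh)),
          eps, if_neg (fun hh => hOw' (oc_symm hh)),
          eps, if_pos (oc_refl Δ w), mul_zero, mul_zero, add_zero, mul_one] at E
        exact zmod_cast_ne hγ E.symm
    · -- u and v in different odd components
      by_cases h1 : OC Δ u w
      · by_cases h2 : OC Δ v w
        · exact hOC (oc_trans h1 (oc_symm h2))
        · have E := key hE v
          rw [eps, if_neg (fun hh => hOC (oc_symm hh)),
            eps, if_pos (oc_refl Δ v), eps, if_neg h2,
            mul_zero, zero_add, mul_one, mul_zero] at E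
          exact zmod_cast_ne hβ E
      · have E := key hE u
        rw [eps, if_pos (oc_refl Δ u), eps, if_neg hOC, eps, if_neg h1,
          mul_one, mul_zero, add_zero, mul_zero] at E
        exact zmod_cast_ne hα E
end

section
/- Let G be a group with a finite symmetric generating set S. If the Cayley graph Cay(G,S) has the falsification by fellow-traveller property (for some constant k), then (G,S) has finitely many cone types. -/
universe u

namespace FFTPAux

variable {G : Type*} [Group G] {S : Set G}

noncomputable def wl (S : Set G) (g : G) : ℕ :=
  sInf {nid | ∃ l : List G, l.length = nid ∧ (∀ s ∈ l, s ∈ S) ∧ l.prod = g}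

lemma wl_le {g : G} (l : List G) (hl : ∀ s ∈ l, s ∈ S) (hp : l.prod = g) :
    wl S g ≤ l.length :=
  Nat.sInf_le ⟨l, rfl, hl, hp⟩

lemma wl_nonempty (hsym : ∀ s ∈ S, s⁻¹ ∈ S) (hgen : Subgroup.closure S = ⊤) (g : G) :
    {nid | ∃ l : List G, l.length = nid ∧ (∀ s ∈ l, s ∈ S) ∧ l.prod = g}.Nonempty := by
  have hg : g ∈ (Subgroup.closure S).toSubmonoid := by rw [hgen]; trivial
  rw [Subgroup.closure_toSubmonoid] at hg
  obtain ⟨l, hl, hp⟩ := Submonoid.exists_list_of_mem_closure hg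
  refine ⟨l.length, l, rfl, fun s hs => ?_, hp⟩
  rcases hl s hs with h | h
  · exact h
  · simpa using hsym _ (Set.mem_inv.mp h)

lemma exists_geodesic (hsym : ∀ s ∈ S, s⁻¹ ∈ S) (hgen : Subgroup.closure S = ⊤) (g : G) :
    ∃ l : List G, l.length = wl S g ∧ (∀ s ∈ l, s ∈ S) ∧ l.prod = g :=
  Nat.sInf_mem (wl_nonempty hsym hgen g)

lemma wl_one : wl S (1 : G) = 0 :=
  Nat.le_zero.mp (wl_le ([] : List G) (by simp) (by simp))

lemma wl_mul_le (hsym : ∀ s ∈ S, s⁻¹ ∈ S) (hgen : Subgroup.closure S = ⊤) (g h : G) :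
    wl S (g * h) ≤ wl S g + wl S h := by
  obtain ⟨l, hll, hlS, hlp⟩ := exists_geodesic hsym hgen g
  obtain ⟨m, hml, hmS, hmp⟩ := exists_geodesic hsym hgen h
  have := wl_le (S := S) (l ++ m) (by intro s hs; rcases List.mem_append.mp hs with h | h
                                      exacts [hlS s h, hmS s h])
    (by rw [List.prod_append, hlp, hmp])
  simpa [hll, hml] using this

lemma wl_mem_le {s : G} (hs : s ∈ S) : wl S s ≤ 1 :=
  wl_le [s] (by simpa using hs) (by simp)

lemma cayley_adj_iff (hsym : ∀ s ∈ S, s⁻¹ ∈ S) {a b : G} :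
    (cayley G S).Adj a b ↔ a ≠ b ∧ a⁻¹ * b ∈ S := by
  rw [cayley, SimpleGraph.fromRel_adj]
  constructor
  · rintro ⟨hne, h | h⟩
    · exact ⟨hne, h⟩
    · refine ⟨hne, ?_⟩
      have := hsym _ h
      simpa [mul_inv_rev] using this
  · rintro ⟨hne, h⟩
    exact ⟨hne, Or.inl h⟩

lemma walk_of_list (hsym : ∀ s ∈ S, s⁻¹ ∈ S) (l : List G) (hl : ∀ s ∈ l, s ∈ S) (g : G) :
    ∃ w : (cayley G S).Walk g (g * l.prod), w.length ≤ l.length := by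
  induction l generalizing g with
  | nil => exact ⟨(SimpleGraph.Walk.nil).copy rfl (by simp), by rw [SimpleGraph.Walk.length_copy]; simp⟩
  | cons s t ih =>
    by_cases hs1 : g = g * s
    · obtain ⟨w, hw⟩ := ih (fun x hx => hl x (List.mem_cons_of_mem _ hx)) g
      refine ⟨w.copy rfl (by rw [List.prod_cons, ← mul_assoc, ← hs1]), ?_⟩
      rw [SimpleGraph.Walk.length_copy]
      simpa using hw.trans (Nat.le_succ _)
    · obtain ⟨w, hw⟩ := ih (fun x hx => hl x (List.mem_cons_of_mem _ hx)) (g * s)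
      have hadj : (cayley G S).Adj g (g * s) := by
        rw [cayley_adj_iff hsym]
        exact ⟨hs1, by simpa using hl s List.mem_cons_self⟩
      refine ⟨(SimpleGraph.Walk.cons hadj w).copy rfl
        (by rw [List.prod_cons, mul_assoc]), ?_⟩
      rw [SimpleGraph.Walk.length_copy]
      simpa using Nat.succ_le_succ hw

lemma wl_le_walk (hsym : ∀ s ∈ S, s⁻¹ ∈ S) (hgen : Subgroup.closure S = ⊤)
    {a b : G} (w : (cayley G S).Walk a b) : wl S (a⁻¹ * b) ≤ w.length := by
  induction w with
  | nil => simpa using wl_one.le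
  | @cons u v b hadj w ih =>
    have huv : u⁻¹ * v ∈ S := ((cayley_adj_iff hsym).mp hadj).2
    have h1 : wl S (u⁻¹ * b) ≤ wl S (u⁻¹ * v) + wl S (v⁻¹ * b) := by
      have := wl_mul_le hsym hgen (u⁻¹ * v) (v⁻¹ * b)
      simpa [mul_assoc] using this
    have h2 : wl S (u⁻¹ * v) ≤ 1 := wl_mem_le huv
    simp only [SimpleGraph.Walk.length_cons]
    omega

lemma cayley_dist_eq (hsym : ∀ s ∈ S, s⁻¹ ∈ S) (hgen : Subgroup.closure S = ⊤)
    (a b : G) : (cayley G S).dist a b = wl S (a⁻¹ * b) := by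
  obtain ⟨l, hll, hlS, hlp⟩ := exists_geodesic hsym hgen (a⁻¹ * b)
  obtain ⟨w, hw⟩ := walk_of_list hsym l hlS a
  have hab : a * l.prod = b := by rw [hlp]; group
  have hle : (cayley G S).dist a b ≤ wl S (a⁻¹ * b) := by
    have h := SimpleGraph.dist_le (w.copy rfl hab)
    rw [SimpleGraph.Walk.length_copy] at h
    omega
  have hge : wl S (a⁻¹ * b) ≤ (cayley G S).dist a b := by
    obtain ⟨p, hp⟩ := (SimpleGraph.Walk.reachable (w.copy rfl hab)).exists_walk_length_eq_dist
    calc wl S (a⁻¹ * b) ≤ p.length := wl_le_walk hsym hgen p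
    _ = _ := hp
  omega

lemma wl_eq_zero (hsym : ∀ s ∈ S, s⁻¹ ∈ S) (hgen : Subgroup.closure S = ⊤)
    {g : G} (h : wl S g = 0) : g = 1 := by
  obtain ⟨l, hll, _, hlp⟩ := exists_geodesic hsym hgen g
  rw [h, List.length_eq_zero_iff] at hll
  rw [hll] at hlp
  simpa using hlp.symm

lemma path_step_le (hsym : ∀ s ∈ S, s⁻¹ ∈ S)
    (q : GraphPath (cayley G S)) (i : ℕ) :
    wl S ((q.toFun i)⁻¹ * q.toFun (i + 1)) ≤ 1 := by
  by_cases hi : i < q.len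
  · exact wl_mem_le (((cayley_adj_iff hsym).mp (q.adj i hi)).2)
  · push_neg at hi
    have h1 := q.stable i hi
    have h2 := q.stable (i + 1) (hi.trans (Nat.le_succ i))
    rw [h1, h2, inv_mul_cancel]
    have h0 : wl S (1 : G) = 0 := wl_one
    omega

lemma path_segment (hsym : ∀ s ∈ S, s⁻¹ ∈ S) (hgen : Subgroup.closure S = ⊤)
    (q : GraphPath (cayley G S)) (d t : ℕ) :
    wl S ((q.toFun t)⁻¹ * q.toFun (t + d)) ≤ d := by
  induction d with
  | zero =>
    simp only [Nat.add_zero, inv_mul_cancel]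
    have h0 : wl S (1 : G) = 0 := wl_one
    omega
  | succ d ih =>
    have h1 : wl S ((q.toFun t)⁻¹ * q.toFun (t + d + 1)) ≤
        wl S ((q.toFun t)⁻¹ * q.toFun (t + d)) +
          wl S ((q.toFun (t + d))⁻¹ * q.toFun (t + d + 1)) := by
      have := wl_mul_le hsym hgen ((q.toFun t)⁻¹ * q.toFun (t + d))
        ((q.toFun (t + d))⁻¹ * q.toFun (t + d + 1))
      simpa [mul_assoc] using this
    have h2 := path_step_le hsym q (t + d)
    have : t + (d + 1) = t + d + 1 := by omega
    rw [this]
    omega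

lemma geodesic_not_one (hsym : ∀ s ∈ S, s⁻¹ ∈ S) {g : G} (l : List G)
    (hl : ∀ s ∈ l, s ∈ S) (hp : l.prod = g) (hlen : l.length = wl S g) :
    (1 : G) ∉ l := by
  intro hmem
  obtain ⟨a, b, rfl⟩ := List.append_of_mem hmem
  have hle : wl S g ≤ (a ++ b).length := by
    refine wl_le (a ++ b) (fun s hs => ?_) ?_
    · rcases List.mem_append.mp hs with h | h
      · exact hl s (List.mem_append.mpr (Or.inl h))
      · exact hl s (List.mem_append.mpr (Or.inr (List.mem_cons_of_mem _ h)))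
    · have := hp
      simp only [List.prod_append, List.prod_cons, one_mul] at this ⊢
      exact this
  simp only [List.length_append, List.length_cons] at hlen hle
  omega

/-- Build a `GraphPath` in the Cayley graph from a word without trivial letters. -/
def pathOfList (hsym : ∀ s ∈ S, s⁻¹ ∈ S) (c : List G) (hS : ∀ s ∈ c, s ∈ S)
    (hone : (1 : G) ∉ c) : GraphPath (cayley G S) where
  len := c.length
  toFun := fun i => (c.take i).prod
  adj := by
    intro i hi
    have hmem : c.get ⟨i, hi⟩ ∈ c := List.get_mem c ⟨i, hi⟩
    show (cayley G S).Adj (c.take i).prod (c.take (i + 1)).prod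
    rw [List.prod_take_succ c i hi, cayley_adj_iff hsym]
    refine ⟨fun h => ?_, by simpa using hS _ hmem⟩
    have : c.get ⟨i, hi⟩ = 1 := by
      have := h.symm
      rwa [mul_eq_left] at this
    exact hone (this ▸ hmem)
  stable := by
    intro i hi
    show (c.take i).prod = (c.take c.length).prod
    rw [List.take_of_length_le hi, List.take_length]

lemma mem_coneType_iff {g y : G} :
    y ∈ coneType S g ↔ wl S (g * y) = wl S g + wl S y := Iff.rfl

/-- The key transfer lemma: under FFTP, the `k`-neighbourhood data determines
membership in cone types. -/
lemma cone_mono (hsym : ∀ s ∈ S, s⁻¹ ∈ S) (hgen : Subgroup.closure S = ⊤)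
    (k : ℕ) (hfftp : FFTP (cayley G S) k) {g h : G}
    (hN : ∀ x : G, wl S x ≤ k → wl S (h * x) ≤ wl S h → wl S (g * x) ≤ wl S g) :
    ∀ n (y : G), wl S y ≤ n → y ∈ coneType S g → y ∈ coneType S h := by
  intro n
  induction n with
  | zero =>
    intro y hy _
    have hy1 : y = 1 := wl_eq_zero hsym hgen (Nat.le_zero.mp hy)
    subst hy1
    refine mem_coneType_iff.mpr ?_
    have h0 : wl S (1 : G) = 0 := wl_one
    rw [mul_one]
    omega
  | succ n ih =>
    intro y hy hyg
    by_cases hyn : wl S y ≤ n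
    · exact ih y hyn hyg
    have hyE : wl S y = n + 1 := by omega
    -- decompose a geodesic word for y
    obtain ⟨l, hll, hlS, hlp⟩ := exists_geodesic hsym hgen y
    have hlne : l ≠ [] := by
      intro hnil
      rw [hnil] at hll
      simp [hyE] at hll
    set s := l.getLast hlne with hs
    set y' := l.dropLast.prod with hy'
    have hsS : s ∈ S := hlS s (List.getLast_mem hlne)
    have hdec : y = y' * s := by
      conv_lhs => rw [← hlp, ← List.dropLast_append_getLast hlne]
      simp [hy', hs]
    have hy'le : wl S y' ≤ n := by
      have hw := wl_le (S := S) l.dropLast (fun x hx => hlS x (List.dropLast_subset l hx)) rfl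
      rw [← hy'] at hw
      have hlen : l.dropLast.length = n := by
        rw [List.length_dropLast, hll, hyE]
        omega
      omega
    have hsle : wl S s ≤ 1 := wl_mem_le hsS
    have hygE : wl S (g * y) = wl S g + (n + 1) := by
      have h0 := mem_coneType_iff.mp hyg
      omega
    have hgy'_ge : wl S g + n ≤ wl S (g * y') := by
      have htri : wl S (g * y) ≤ wl S (g * y') + wl S s := by
        have := wl_mul_le hsym hgen (g * y') s
        rw [hdec, ← mul_assoc]
        exact this
      omega
    have hgy'_le : wl S (g * y') ≤ wl S g + wl S y' := wl_mul_le hsym hgen g y'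
    have hy'E : wl S y' = n := by omega
    have hy'g : y' ∈ coneType S g := mem_coneType_iff.mpr (by omega)
    have hy'h : y' ∈ coneType S h := ih y' hy'le hy'g
    have hhy'E : wl S (h * y') = wl S h + n := by
      have h0 := mem_coneType_iff.mp hy'h
      omega
    -- the two directions for `h * y`
    have hub : wl S (h * y) ≤ wl S h + (n + 1) := by
      have htri : wl S (h * y) ≤ wl S (h * y') + wl S s := by
        have := wl_mul_le hsym hgen (h * y') s
        rw [hdec, ← mul_assoc]
        exact this
      omega
    have hlb : ¬ wl S (h * y) ≤ wl S h + n := by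
      intro hbad
      -- build the non-geodesic path
      obtain ⟨m, hml, hmS, hmp⟩ := exists_geodesic hsym hgen h
      obtain ⟨l'', hl''l, hl''S, hl''p⟩ := exists_geodesic hsym hgen y'
      have hmone : (1 : G) ∉ m := geodesic_not_one hsym m hmS hmp hml
      have hl''one : (1 : G) ∉ l'' := geodesic_not_one hsym l'' hl''S hl''p hl''l
      have hsone : s ≠ 1 := by
        intro hs1
        exact (geodesic_not_one hsym l hlS hlp hll) (hs1 ▸ List.getLast_mem hlne)
      set c : List G := m ++ (l'' ++ [s]) with hc
      have hcS : ∀ x ∈ c, x ∈ S := by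
        intro x hx
        rcases List.mem_append.mp hx with h1 | h1
        · exact hmS x h1
        rcases List.mem_append.mp h1 with h2 | h2
        · exact hl''S x h2
        · rw [List.mem_singleton.mp h2]; exact hsS
      have hcone : (1 : G) ∉ c := by
        intro hx
        rcases List.mem_append.mp hx with h1 | h1
        · exact hmone h1
        rcases List.mem_append.mp h1 with h2 | h2
        · exact hl''one h2
        · exact hsone (List.mem_singleton.mp h2).symm
      set p : GraphPath (cayley G S) := pathOfList hsym c hcS hcone with hp
      have hplen : p.len = wl S h + n + 1 := by
        show c.length = _
        simp only [hc, List.length_append, List.length_singleton, hml, hl''l, hy'E]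
        omega
      have hp0 : p.toFun 0 = 1 := by
        show (c.take 0).prod = 1
        simp
      have hpend : p.toFun p.len = h * y := by
        show (c.take c.length).prod = h * y
        rw [List.take_length, hc]
        simp [List.prod_append, hmp, hl''p, hdec, mul_assoc]
      have hpL : p.toFun (wl S h) = h := by
        show (c.take (wl S h)).prod = h
        rw [hc, ← hml, List.take_left]
        exact hmp
      have hng : ¬ IsGeodesic p := by
        intro hgeo
        have := hgeo
        rw [IsGeodesic, hp0, hpend, hplen, cayley_dist_eq hsym hgen] at this
        simp only [inv_one, one_mul] at this
        omega
      obtain ⟨q, hq0, hqend, hqlen, hft⟩ := hfftp p hng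
      set L := wl S h with hL
      set x := h⁻¹ * q.toFun L with hxdef
      have hx1 : wl S x ≤ k := by
        have hft' := hft L
        rw [cayley_dist_eq hsym hgen, hpL, ← hxdef] at hft'
        exact hft'
      have hx2 : wl S (h * x) ≤ wl S h := by
        have hseg := path_segment hsym hgen q L 0
        rw [hq0, hp0] at hseg
        simp only [inv_one, one_mul, Nat.zero_add] at hseg
        have : h * x = q.toFun L := by rw [hxdef]; group
        rw [this]
        exact hseg
      have hx3 : wl S (x⁻¹ * y) ≤ n := by
        have hxy : x⁻¹ * y = (q.toFun L)⁻¹ * q.toFun q.len := by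
          rw [hqend, hpend, hxdef]
          group
        by_cases hLq : L ≤ q.len
        · have hseg := path_segment hsym hgen q (q.len - L) L
          have harith : L + (q.len - L) = q.len := by omega
          rw [harith] at hseg
          rw [hxy]
          have : q.len - L ≤ n := by omega
          omega
        · push_neg at hLq
          have hstab := q.stable L hLq.le
          rw [hxy, hstab, inv_mul_cancel]
          have h0 : wl S (1 : G) = 0 := wl_one
          omega
      have hgx : wl S (g * x) ≤ wl S g := hN x hx1 hx2
      have hfinal : wl S (g * y) ≤ wl S g + n := by
        have htri : wl S (g * y) ≤ wl S (g * x) + wl S (x⁻¹ * y) := by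
          have := wl_mul_le hsym hgen (g * x) (x⁻¹ * y)
          have heq : g * x * (x⁻¹ * y) = g * y := by group
          rwa [heq] at this
        omega
      omega
    exact mem_coneType_iff.mpr (by omega)

lemma ball_finite (hsym : ∀ s ∈ S, s⁻¹ ∈ S) (hgen : Subgroup.closure S = ⊤)
    (hfin : S.Finite) : ∀ k : ℕ, {x : G | wl S x ≤ k}.Finite := by
  intro k
  induction k with
  | zero =>
    refine Set.Finite.subset (Set.finite_singleton 1) ?_
    intro x hx
    exact wl_eq_zero hsym hgen (Nat.le_zero.mp hx)
  | succ k ih =>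
    refine Set.Finite.subset (ih.union (Set.Finite.image2 (· * ·) ih hfin)) ?_
    intro x hx
    by_cases hxk : wl S x ≤ k
    · exact Or.inl hxk
    have hx' : wl S x ≤ k + 1 := hx
    have hxE : wl S x = k + 1 := by omega
    obtain ⟨l, hll, hlS, hlp⟩ := exists_geodesic hsym hgen x
    have hlne : l ≠ [] := by
      intro hnil; rw [hnil] at hll; simp [hxE] at hll
    refine Or.inr (Set.mem_image2.mpr ⟨l.dropLast.prod, ?_, l.getLast hlne,
      hlS _ (List.getLast_mem hlne), ?_⟩)
    · show wl S l.dropLast.prod ≤ k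
      have hw := wl_le (S := S) l.dropLast (fun t ht => hlS t (List.dropLast_subset l ht)) rfl
      have hlen : l.dropLast.length = k := by
        rw [List.length_dropLast, hll, hxE]
        omega
      omega
    · show l.dropLast.prod * l.getLast hlne = x
      rw [← hlp]
      conv_rhs => rw [← List.dropLast_append_getLast hlne]
      simp

end FFTPAux

/-- If the Cayley graph of a group `G` with respect to a finite
symmetric generating set `S` has the falsification by fellow-traveller property (for
some constant `k`), then `(G,S)` has finitely many cone types. -/
theorem fftp_finitely_many_cone_types {G : Type*} [Group G] (S : Set G)
    (hfin : S.Finite) (hsym : ∀ s ∈ S, s⁻¹ ∈ S) (hgen : Subgroup.closure S = ⊤)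
    (k : ℕ) (hfftp : FFTP (cayley G S) k) :
    (Set.range fun g : G => coneType S g).Finite := by
  classical
  set N : G → Set G :=
    fun g => {x | FFTPAux.wl S x ≤ k ∧ FFTPAux.wl S (g * x) ≤ FFTPAux.wl S g} with hNdef
  have hdir : ∀ g h : G, N g = N h → coneType S g ⊆ coneType S h := by
    intro g h he y hy
    have hNgh : ∀ x : G, FFTPAux.wl S x ≤ k → FFTPAux.wl S (h * x) ≤ FFTPAux.wl S h →
        FFTPAux.wl S (g * x) ≤ FFTPAux.wl S g := by
      intro x h1 h2
      have hxh : x ∈ N h := ⟨h1, h2⟩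
      have hxg : x ∈ N g := he ▸ hxh
      exact hxg.2
    exact FFTPAux.cone_mono hsym hgen k hfftp hNgh (FFTPAux.wl S y) y le_rfl hy
  have hkey : ∀ g h : G, N g = N h → coneType S g = coneType S h := fun g h he =>
    Set.Subset.antisymm (hdir g h he) (hdir h g he.symm)
  have hball := FFTPAux.ball_finite hsym hgen hfin k
  have hrange : (Set.range N).Finite := by
    refine Set.Finite.subset hball.finite_subsets ?_
    rintro _ ⟨g, rfl⟩ x hx
    exact hx.1
  let ψ : Set G → Set G :=
    fun A => if hA : ∃ g : G, N g = A then coneType S hA.choose else ∅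
  have hψ : ∀ g : G, coneType S g = ψ (N g) := by
    intro g
    have hA : ∃ g' : G, N g' = N g := ⟨g, rfl⟩
    simp only [ψ, dif_pos hA]
    exact (hkey _ _ hA.choose_spec).symm
  refine Set.Finite.subset (hrange.image ψ) ?_
  rintro _ ⟨g, rfl⟩
  exact ⟨N g, ⟨g, rfl⟩, (hψ g).symm⟩
end
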